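/- (Front-door adjustment, Step 2: back-door formula for P(y|do(z)).) Fix z : 𝒵 and assume P(x, z) > 0 for every x : 𝒳, where P(x, z) = Σ_{u, y} P(u, x, z, y). Then for every y : 𝒴, the interventional probability of Y = y under do(Z = z) is given by adjusting for X: Σ_x P(x, y | do(z)) = Σ_x (P(x, z, y) / P(x, z)) · P(x), where P(x, z, y) = Σ_u P(u, x, z, y) and P(x) = Σ_{u, z', y} P(u, x, z', y). -/

import Mathlib

/- Causal Bayesian network of Figure 1: latent `U`, structure `X ← U → Y`, `X → Z → Y`.
The observational joint is `P(u,x,z,y) = pU u * pX u x * pZ x z * pY u z y`. -/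

/-- Step 2 of the front-door adjustment: back-door adjustment formula for `P(y | do(z))`. -/
theorem frontdoor_step2 {𝒰 𝒳 𝒵 𝒴 : Type*} [Fintype 𝒰] [Fintype 𝒳] [Fintype 𝒵] [Fintype 𝒴]
    [Nonempty 𝒰] [Nonempty 𝒳] [Nonempty 𝒵] [Nonempty 𝒴]
    (pU : 𝒰 → ℝ) (pX : 𝒰 → 𝒳 → ℝ) (pZ : 𝒳 → 𝒵 → ℝ) (pY : 𝒰 → 𝒵 → 𝒴 → ℝ)
    (hU0 : ∀ u, 0 ≤ pU u) (hX0 : ∀ u x, 0 ≤ pX u x)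
    (hZ0 : ∀ x z, 0 ≤ pZ x z) (hY0 : ∀ u z y, 0 ≤ pY u z y)
    (hU1 : ∑ u, pU u = 1) (hX1 : ∀ u, ∑ x, pX u x = 1)
    (hZ1 : ∀ x, ∑ z, pZ x z = 1) (hY1 : ∀ u z, ∑ y, pY u z y = 1)
    (z : 𝒵) (hpos : ∀ x : 𝒳, 0 < ∑ u, ∑ y, pU u * pX u x * pZ x z * pY u z y) (y : 𝒴) :
    ∑ x, (∑ u, pU u * pX u x * pY u z y) =
      ∑ x, ((∑ u, pU u * pX u x * pZ x z * pY u z y) /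
              (∑ u, ∑ y', pU u * pX u x * pZ x z * pY u z y')) *
            (∑ u, ∑ z', ∑ y', pU u * pX u x * pZ x z' * pY u z' y') := by
  apply Finset.sum_congr rfl
  intro x _
  set A := ∑ u, pU u * pX u x with hA
  set M := ∑ u, pU u * pX u x * pY u z y with hM
  have hden : (∑ u, ∑ y', pU u * pX u x * pZ x z * pY u z y') = pZ x z * A := by
    rw [hA, Finset.mul_sum]
    apply Finset.sum_congr rfl
    intro u _
    rw [show ∑ y', pU u * pX u x * pZ x z * pY u z y' =
        pU u * pX u x * pZ x z * ∑ y', pY u z y' from (Finset.mul_sum _ _ _).symm,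
      hY1]; ring
  have hnum : (∑ u, pU u * pX u x * pZ x z * pY u z y) = pZ x z * M := by
    rw [hM, Finset.mul_sum]
    exact Finset.sum_congr rfl fun u _ => by ring
  have hmarg : (∑ u, ∑ z', ∑ y', pU u * pX u x * pZ x z' * pY u z' y') = A := by
    rw [hA]
    apply Finset.sum_congr rfl
    intro u _
    have : ∀ z', ∑ y', pU u * pX u x * pZ x z' * pY u z' y' =
        pU u * pX u x * pZ x z' := by
      intro z'
      rw [show ∑ y', pU u * pX u x * pZ x z' * pY u z' y' =
          pU u * pX u x * pZ x z' * ∑ y', pY u z' y' from (Finset.mul_sum _ _ _).symm,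
        hY1]; ring
    simp_rw [this]
    rw [show ∑ z', pU u * pX u x * pZ x z' = pU u * pX u x * ∑ z', pZ x z' from
      (Finset.mul_sum _ _ _).symm, hZ1]; ring
  have hpos' : 0 < pZ x z * A := by
    have := hpos x
    rwa [hden] at this
  rw [hnum, hden, hmarg]
  have hZne : pZ x z ≠ 0 := left_ne_zero_of_mul hpos'.ne'
  have hAne : A ≠ 0 := right_ne_zero_of_mul hpos'.ne'
  rw [mul_div_mul_left _ _ hZne, div_mul_cancel₀ _ hAne]
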